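/- Let F̄(x) = (1/2)‖Āx − b̄‖² + τ‖x‖₁ with τ > 0 and optimal value F̄* attained at x*. Then for any x ∈ ℝⁿ: |‖Āx − b̄‖² − ‖Āx* − b̄‖²| ≤ 2(√F̄(x) + √F̄*)·√(F̄(x) − F̄*), and |‖x‖₁ − ‖x*‖₁| ≤ (1/τ)[F̄(x) − F̄* + (√F̄(x) + √F̄*)·√(F̄(x) − F̄*)]. -/

import Mathlib

open Matrix RealInnerProductSpace

lemma dot_self_nonneg' {m : ℕ} (v : Fin m → ℝ) : 0 ≤ v ⬝ᵥ v :=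
  Finset.sum_nonneg fun i _ => mul_self_nonneg _

lemma sqrt_dot_eq_norm {m : ℕ} (v : Fin m → ℝ) :
    Real.sqrt (v ⬝ᵥ v) = ‖(WithLp.equiv 2 (Fin m → ℝ)).symm v‖ := by
  have h : v ⬝ᵥ v = ⟪(WithLp.equiv 2 (Fin m → ℝ)).symm v, (WithLp.equiv 2 (Fin m → ℝ)).symm v⟫ := by
    rw [PiLp.inner_apply]; simp [RCLike.inner_apply, dotProduct, mul_comm, sq]
  rw [h, real_inner_self_eq_norm_mul_norm, Real.sqrt_mul_self (norm_nonneg _)]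

lemma dot_cs {m : ℕ} (v w : Fin m → ℝ) :
    |v ⬝ᵥ w| ≤ Real.sqrt (v ⬝ᵥ v) * Real.sqrt (w ⬝ᵥ w) := by
  have h : v ⬝ᵥ w = ⟪(WithLp.equiv 2 (Fin m → ℝ)).symm v, (WithLp.equiv 2 (Fin m → ℝ)).symm w⟫ := by
    rw [PiLp.inner_apply]; simp [RCLike.inner_apply, dotProduct, mul_comm]
  rw [h, sqrt_dot_eq_norm, sqrt_dot_eq_norm]
  exact abs_real_inner_le_norm _ _

lemma sqrt_dot_add_le {m : ℕ} (v w : Fin m → ℝ) :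
    Real.sqrt ((v + w) ⬝ᵥ (v + w)) ≤ Real.sqrt (v ⬝ᵥ v) + Real.sqrt (w ⬝ᵥ w) := by
  rw [sqrt_dot_eq_norm, sqrt_dot_eq_norm, sqrt_dot_eq_norm]
  rw [show (WithLp.equiv 2 (Fin m → ℝ)).symm (v + w)
      = (WithLp.equiv 2 (Fin m → ℝ)).symm v + (WithLp.equiv 2 (Fin m → ℝ)).symm w from rfl]
  exact norm_add_le _ _


/-- `F̄(x) = (1/2)‖Āx − b̄‖² + τ‖x‖₁`. -/
noncomputable def lsObj {m n : ℕ} (Ab : Matrix (Fin m) (Fin n) ℝ) (bb : Fin m → ℝ)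
    (τ : ℝ) (x : Fin n → ℝ) : ℝ :=
  (1 / 2) * ((Ab.mulVec x - bb) ⬝ᵥ (Ab.mulVec x - bb)) + τ * ∑ i, |x i|

set_option maxHeartbeats 1000000

/-- for any optimal `x*`,
`|‖Āx − b̄‖² − ‖Āx* − b̄‖²| ≤ 2(√F̄(x) + √F̄*)√(F̄(x) − F̄*)` and
`|‖x‖₁ − ‖x*‖₁| ≤ (1/τ)[F̄(x) − F̄* + (√F̄(x) + √F̄*)√(F̄(x) − F̄*)]`. -/
theorem stmt12 {m n : ℕ} (Ab : Matrix (Fin m) (Fin n) ℝ) (bb : Fin m → ℝ) (τ : ℝ)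
    (hτ : 0 < τ) (xstar : Fin n → ℝ)
    (hopt : ∀ y, lsObj Ab bb τ xstar ≤ lsObj Ab bb τ y) :
    ∀ x : Fin n → ℝ,
      |(Ab.mulVec x - bb) ⬝ᵥ (Ab.mulVec x - bb) -
          (Ab.mulVec xstar - bb) ⬝ᵥ (Ab.mulVec xstar - bb)| ≤
        2 * (Real.sqrt (lsObj Ab bb τ x) + Real.sqrt (lsObj Ab bb τ xstar)) *
          Real.sqrt (lsObj Ab bb τ x - lsObj Ab bb τ xstar) ∧
      abs ((∑ i, |x i|) - ∑ i, |xstar i|) ≤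
        (1 / τ) * (lsObj Ab bb τ x - lsObj Ab bb τ xstar +
          (Real.sqrt (lsObj Ab bb τ x) + Real.sqrt (lsObj Ab bb τ xstar)) *
            Real.sqrt (lsObj Ab bb τ x - lsObj Ab bb τ xstar)) := by
  intro x
  set r : Fin m → ℝ := Ab.mulVec x - bb with hr
  set s : Fin m → ℝ := Ab.mulVec xstar - bb with hs
  set d : Fin m → ℝ := r - s with hd
  have hsd : s + d = r := by rw [hd]; abel
  set q : ℝ := r ⬝ᵥ r with hq
  set qs : ℝ := s ⬝ᵥ s with hqs
  set D : ℝ := d ⬝ᵥ d with hD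
  set Lx : ℝ := ∑ i, |x i| with hLx
  set Ls : ℝ := ∑ i, |xstar i| with hLs
  set Fx : ℝ := lsObj Ab bb τ x with hFx
  set Fs : ℝ := lsObj Ab bb τ xstar with hFs
  have hFxeq : Fx = (1/2) * q + τ * Lx := rfl
  have hFseq : Fs = (1/2) * qs + τ * Ls := rfl
  have hLxnn : 0 ≤ Lx := Finset.sum_nonneg fun i _ => abs_nonneg _
  have hLsnn : 0 ≤ Ls := Finset.sum_nonneg fun i _ => abs_nonneg _
  have hqnn : 0 ≤ q := dot_self_nonneg' r
  have hqsnn : 0 ≤ qs := dot_self_nonneg' s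
  have hDnn : 0 ≤ D := dot_self_nonneg' d
  have hFxnn : 0 ≤ Fx := by rw [hFxeq]; nlinarith
  have hFsnn : 0 ≤ Fs := by rw [hFseq]; nlinarith
  have hδnn : 0 ≤ Fx - Fs := sub_nonneg.mpr (hopt x)
  -- expansion of q
  have hqexp : q = qs + 2 * (s ⬝ᵥ d) + D := by
    rw [hq, ← hsd, add_dotProduct, dotProduct_add, dotProduct_add,
      dotProduct_comm d s]
    ring
  set c : ℝ := s ⬝ᵥ d + τ * (Lx - Ls) with hc
  have hδeq : Fx - Fs = c + D / 2 := by
    rw [hFxeq, hFseq, hqexp, hc]; ring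
  -- the key inequality from optimality along the segment
  have hseg : ∀ l : ℝ, 0 ≤ l → l ≤ 1 → 0 ≤ l * c + l ^ 2 * D / 2 := by
    intro l hl0 hl1
    have hy := hopt (xstar + l • (x - xstar))
    have hdvec : Ab.mulVec x - Ab.mulVec xstar = d := by
      rw [hd, hr, hs]; abel
    have hmv : Ab.mulVec (xstar + l • (x - xstar)) - bb = s + l • d := by
      rw [Matrix.mulVec_add, Matrix.mulVec_smul, Matrix.mulVec_sub, hdvec, hs]
      abel
    have hdot : (s + l • d) ⬝ᵥ (s + l • d) = qs + 2 * l * (s ⬝ᵥ d) + l ^ 2 * D := by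
      rw [add_dotProduct, dotProduct_add, dotProduct_add,
        smul_dotProduct, smul_dotProduct, dotProduct_smul,
        dotProduct_smul, dotProduct_comm d s]
      simp [smul_eq_mul]
      ring
    have hl1' : ∑ i, |(xstar + l • (x - xstar)) i| ≤ (1 - l) * Ls + l * Lx := by
      rw [hLs, hLx, Finset.mul_sum, Finset.mul_sum, ← Finset.sum_add_distrib]
      apply Finset.sum_le_sum
      intro i _
      have : (xstar + l • (x - xstar)) i = (1 - l) * xstar i + l * x i := by
        simp [smul_eq_mul]; ring
      rw [this]
      calc |(1 - l) * xstar i + l * x i| ≤ |(1 - l) * xstar i| + |l * x i| := abs_add_le _ _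
        _ = (1 - l) * |xstar i| + l * |x i| := by
            rw [abs_mul, abs_mul, abs_of_nonneg (by linarith), abs_of_nonneg hl0]
    have hFy : lsObj Ab bb τ (xstar + l • (x - xstar)) ≤
        (1/2) * (qs + 2 * l * (s ⬝ᵥ d) + l ^ 2 * D) + τ * ((1 - l) * Ls + l * Lx) := by
      unfold lsObj
      rw [hmv, hdot]
      have := mul_le_mul_of_nonneg_left hl1' (le_of_lt hτ)
      linarith
    have h2 : Fs ≤ (1/2) * (qs + 2 * l * (s ⬝ᵥ d) + l ^ 2 * D) + τ * ((1 - l) * Ls + l * Lx) :=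
      le_trans hy hFy
    rw [hFseq] at h2
    rw [hc]
    nlinarith
  -- c ≥ 0
  have hcnn : 0 ≤ c := by
    by_contra hcneg
    clear_value D c
    push_neg at hcneg
    rcases eq_or_lt_of_le hDnn with hD0 | hDpos
    · have := hseg 1 zero_le_one le_rfl
      rw [← hD0] at this
      nlinarith
    · obtain ⟨l, hlpos, hl1, hl2⟩ : ∃ l : ℝ, 0 < l ∧ l ≤ 1 ∧ l ≤ -c / D :=
        ⟨min 1 (-c / D), lt_min one_pos (div_pos (neg_pos.mpr hcneg) hDpos),
          min_le_left _ _, min_le_right _ _⟩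
      have hkey := hseg l (le_of_lt hlpos) hl1
      have hlD : l * D ≤ -c := by
        have h := mul_le_mul_of_nonneg_right hl2 hDpos.le
        rwa [div_mul_cancel₀ _ (ne_of_gt hDpos)] at h
      have h3 : l ^ 2 * D ≤ -(l * c) := by
        calc l ^ 2 * D = l * (l * D) := by ring
          _ ≤ l * (-c) := mul_le_mul_of_nonneg_left hlD hlpos.le
          _ = -(l * c) := by ring
      have h4 : 0 < -(l * c) := by
        have := mul_pos hlpos (neg_pos.mpr hcneg); linarith [mul_neg l c]
      linarith
  have hD2δ : D ≤ 2 * (Fx - Fs) := by rw [hδeq]; linarith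
  -- sqrt bounds
  have hsD : Real.sqrt D ≤ Real.sqrt 2 * Real.sqrt (Fx - Fs) := by
    rw [← Real.sqrt_mul (by norm_num : (0:ℝ) ≤ 2)]
    exact Real.sqrt_le_sqrt hD2δ
  have hsq : Real.sqrt q ≤ Real.sqrt 2 * Real.sqrt Fx := by
    rw [← Real.sqrt_mul (by norm_num : (0:ℝ) ≤ 2)]
    apply Real.sqrt_le_sqrt; rw [hFxeq]; nlinarith
  have hsqs : Real.sqrt qs ≤ Real.sqrt 2 * Real.sqrt Fs := by
    rw [← Real.sqrt_mul (by norm_num : (0:ℝ) ≤ 2)]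
    apply Real.sqrt_le_sqrt; rw [hFseq]; nlinarith
  have hs2 : Real.sqrt 2 * Real.sqrt 2 = 2 := Real.mul_self_sqrt (by norm_num)
  -- part 1
  have hdiff : q - qs = (r + s) ⬝ᵥ d := by
    rw [add_dotProduct, hqexp, ← hsd, add_dotProduct, dotProduct_comm s d]
    ring
  have hpart1 : |q - qs| ≤ 2 * (Real.sqrt Fx + Real.sqrt Fs) * Real.sqrt (Fx - Fs) := by
    rw [hdiff]
    calc |(r + s) ⬝ᵥ d| ≤ Real.sqrt ((r + s) ⬝ᵥ (r + s)) * Real.sqrt D := dot_cs _ _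
      _ ≤ (Real.sqrt q + Real.sqrt qs) * Real.sqrt D := by
          apply mul_le_mul_of_nonneg_right (sqrt_dot_add_le r s) (Real.sqrt_nonneg _)
      _ ≤ (Real.sqrt 2 * Real.sqrt Fx + Real.sqrt 2 * Real.sqrt Fs) *
            (Real.sqrt 2 * Real.sqrt (Fx - Fs)) := by
          apply mul_le_mul (add_le_add hsq hsqs) hsD (Real.sqrt_nonneg _)
          positivity
      _ = 2 * (Real.sqrt Fx + Real.sqrt Fs) * Real.sqrt (Fx - Fs) := by
          rw [show (Real.sqrt 2 * Real.sqrt Fx + Real.sqrt 2 * Real.sqrt Fs) *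
              (Real.sqrt 2 * Real.sqrt (Fx - Fs)) =
              (Real.sqrt 2 * Real.sqrt 2) * (Real.sqrt Fx + Real.sqrt Fs) *
              Real.sqrt (Fx - Fs) by ring, hs2]
  refine ⟨hpart1, ?_⟩
  -- part 2
  have hτL : τ * (Lx - Ls) = (Fx - Fs) - (q - qs) / 2 := by
    rw [hFxeq, hFseq]; ring
  have habs : τ * |Lx - Ls| ≤ (Fx - Fs) +
      (Real.sqrt Fx + Real.sqrt Fs) * Real.sqrt (Fx - Fs) := by
    have h1 : |τ * (Lx - Ls)| ≤ (Fx - Fs) + |q - qs| / 2 := by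
      rw [hτL]
      calc |(Fx - Fs) - (q - qs) / 2| ≤ |Fx - Fs| + |(q - qs) / 2| := abs_sub _ _
        _ = (Fx - Fs) + |q - qs| / 2 := by
            rw [abs_of_nonneg hδnn, abs_div, abs_of_nonneg (by norm_num : (0:ℝ) ≤ 2)]
    rw [abs_mul, abs_of_pos hτ] at h1
    linarith
  rw [one_div, ← div_eq_inv_mul, le_div_iff₀ hτ]
  calc |Lx - Ls| * τ = τ * |Lx - Ls| := mul_comm _ _
    _ ≤ _ := habs
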